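/- Let H ≥ 2 be an integer and J = {0,1} ∪ {2H-1, 2H}. Then for every positive integer h < 2H - 1, |hJ| = (h+1)². -/

import Mathlib

open Finset Pointwise

/-- `hsum h A` is the `h`-fold sumset of `A` (pointwise sum of `h` copies). -/
def hsum (h : ℕ) (A : Finset ℤ) : Finset ℤ := ∑ _i ∈ Finset.range h, A

/-- `transl t A` is the translate `t + A`. -/
def transl (t : ℤ) (A : Finset ℤ) : Finset ℤ := A.image (t + ·)

lemma hsum_succ (h : ℕ) (A : Finset ℤ) : hsum (h+1) A = hsum h A + A := by
  simp only [hsum, Finset.sum_range_succ]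

lemma hsum_add (h : ℕ) (A B : Finset ℤ) : hsum h (A+B) = hsum h A + hsum h B := by
  exact Finset.sum_add_distrib

lemma hsum_01 (h : ℕ) : hsum h {(0:ℤ),1} = Finset.Icc 0 (h:ℤ) := by
  induction h with
  | zero => rfl
  | succ n ih =>
    rw [hsum_succ, ih]
    ext z
    simp only [Finset.mem_add, Finset.mem_Icc, Finset.mem_insert, Finset.mem_singleton]
    push_cast
    constructor
    · rintro ⟨a, ⟨h1, h2⟩, b, hb, rfl⟩; omega
    · rintro ⟨h1, h2⟩
      by_cases hz : z ≤ (n:ℤ)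
      · exact ⟨z, ⟨h1, hz⟩, 0, Or.inl rfl, by ring⟩
      · exact ⟨z - 1, ⟨by omega, by omega⟩, 1, Or.inr rfl, by ring⟩

lemma hsum_0c (h : ℕ) (c : ℤ) :
    hsum h {(0:ℤ), c} = (Finset.Icc (0:ℤ) h).image (fun k => k * c) := by
  induction h with
  | zero =>
    ext z; simp [hsum]
  | succ n ih =>
    rw [hsum_succ, ih]
    ext z
    simp only [Finset.mem_add, Finset.mem_image, Finset.mem_Icc, Finset.mem_insert,
      Finset.mem_singleton]
    push_cast
    constructor
    · rintro ⟨k, ⟨h1, h2⟩, b, hb, rfl⟩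
      rcases hb with rfl | rfl
      · exact ⟨k, by omega, by ring⟩
      · exact ⟨k + 1, ⟨by omega, by omega⟩, by ring⟩
    · rintro ⟨k, ⟨h1, h2⟩, rfl⟩
      by_cases hk : k ≤ (n:ℤ)
      · exact ⟨k, by omega, 0, Or.inl rfl, by ring⟩
      · exact ⟨k - 1, ⟨by omega, by omega⟩, c, Or.inr rfl, by ring⟩

lemma J_split (H : ℕ) :
    ({0, 1} ∪ {2 * (H : ℤ) - 1, 2 * (H : ℤ)} : Finset ℤ)
      = ({0, 1} : Finset ℤ) + {0, 2 * (H : ℤ) - 1} := by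
  ext z
  simp only [Finset.mem_union, Finset.mem_add, Finset.mem_insert, Finset.mem_singleton]
  constructor
  · rintro ((rfl | rfl) | (rfl | rfl))
    · exact ⟨0, Or.inl rfl, 0, Or.inl rfl, by ring⟩
    · exact ⟨1, Or.inr rfl, 0, Or.inl rfl, by ring⟩
    · exact ⟨0, Or.inl rfl, 2 * (H:ℤ) - 1, Or.inr rfl, by ring⟩
    · exact ⟨1, Or.inr rfl, 2 * (H:ℤ) - 1, Or.inr rfl, by ring⟩
  · rintro ⟨a, (rfl | rfl), b, (rfl | rfl), rfl⟩ <;> simp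

theorem stmt_8 (H : ℕ) (hH : 2 ≤ H) (h : ℕ) (hh : 1 ≤ h) (hhH : h < 2 * H - 1) :
    (hsum h ({0, 1} ∪ {2 * (H : ℤ) - 1, 2 * (H : ℤ)})).card = (h + 1) ^ 2 := by
  set c : ℤ := 2 * (H : ℤ) - 1 with hc
  have hch : (h : ℤ) < c := by simp [hc]; push_cast; omega
  rw [J_split, hsum_add, hsum_01, hsum_0c]
  have key : Finset.Icc (0:ℤ) h + (Finset.Icc (0:ℤ) h).image (fun k => k * c)
      = (Finset.Icc (0:ℤ) h ×ˢ Finset.Icc (0:ℤ) h).image (fun p => p.1 + p.2 * c) := by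
    ext z
    simp only [Finset.mem_add, Finset.mem_image, Finset.mem_product, Finset.mem_Icc]
    constructor
    · rintro ⟨a, ha, b, ⟨k, hk, rfl⟩, rfl⟩
      exact ⟨(a, k), ⟨ha, hk⟩, rfl⟩
    · rintro ⟨⟨a, k⟩, ⟨ha, hk⟩, rfl⟩
      exact ⟨a, ha, k * c, ⟨k, hk, rfl⟩, rfl⟩
  rw [key, Finset.card_image_of_injOn, Finset.card_product, Int.card_Icc]
  · simp; ring
  · rintro ⟨s1, k1⟩ hp ⟨s2, k2⟩ hq heq
    simp only [Finset.mem_coe, Finset.mem_product, Finset.mem_Icc] at hp hq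
    obtain ⟨⟨hs1, hs1'⟩, hk1, hk1'⟩ := hp
    obtain ⟨⟨hs2, hs2'⟩, hk2, hk2'⟩ := hq
    simp only at heq
    have hkk : k1 = k2 := by
      rcases lt_trichotomy k1 k2 with hlt | he | hgt
      · have h1 : (1:ℤ) ≤ k2 - k1 := by omega
        have h2 : (1:ℤ) * c ≤ (k2 - k1) * c := by
          apply mul_le_mul_of_nonneg_right h1; omega
        nlinarith
      · exact he
      · have h1 : (1:ℤ) ≤ k1 - k2 := by omega
        have h2 : (1:ℤ) * c ≤ (k1 - k2) * c := by
          apply mul_le_mul_of_nonneg_right h1; omega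
        nlinarith
    have : s1 = s2 := by
      rw [hkk] at heq; omega
    simp [this, hkk]
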